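/- Let the target welfare set W(I) contain all balanced allocations of instance I. Then the W-Constrained Round Robin algorithm coincides with a round-robin sequential allocation rule on I; in particular, if additionally all utilities are strictly positive, the output allocation is NEF1. -/

import Mathlib

open Finset

/-- A complete allocation `q : O → Fin n` is balanced if any two bundle sizes differ by at
most one. -/
def Balanced10 {n : ℕ} {O : Type*} [Fintype O] [DecidableEq O] (q : O → Fin n) : Prop :=
  ∀ i j : Fin n,
    (Finset.univ.filter fun o => q o = i).card ≤ (Finset.univ.filter fun o => q o = j).card + 1

/-- A partial assignment `done` (a list of agent–item pairs) can be completed to an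
allocation in `W`. -/
def Completable10 {n : ℕ} {O : Type*} (W : (O → Fin n) → Prop)
    (done : List (Fin n × O)) : Prop :=
  ∃ q : O → Fin n, W q ∧ ∀ pr ∈ done, q pr.2 = pr.1

/-- Number of items agent `i` has received so far. -/
def cnt10 {n : ℕ} {O : Type*} (done : List (Fin n × O)) (i : Fin n) : ℕ :=
  (done.map Prod.fst).count i

/-- A run of the W-Constrained Round Robin algorithm: at each step, among the agents
having the fewest items so far, the agent `a` of lowest index for whom some most-preferred
remaining item can be assigned while keeping the partial allocation completable to an
allocation in `W` receives such an item. -/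
def crrValid {n : ℕ} {O : Type*} [DecidableEq O] (W : (O → Fin n) → Prop)
    (u : Fin n → O → ℝ) :
    List (Fin n) → List O → List (Fin n × O) → Finset O → Prop
  | [], [], _, _ => True
  | a :: s, o :: ps, done, rem =>
      o ∈ rem ∧ (∀ o' ∈ rem, u a o' ≤ u a o) ∧ Completable10 W ((a, o) :: done) ∧
      (∀ b : Fin n, cnt10 done a ≤ cnt10 done b) ∧
      (∀ b : Fin n, (∀ b' : Fin n, cnt10 done b ≤ cnt10 done b') →
        (∃ o' ∈ rem, (∀ o'' ∈ rem, u b o'' ≤ u b o') ∧ Completable10 W ((b, o') :: done)) →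
        a ≤ b) ∧
      crrValid W u s ps ((a, o) :: done) (rem.erase o)
  | _, _, _, _ => False

/-- Ordinary sequential allocation: each agent on their turn picks a remaining item of
maximal utility. -/
def seqValid10 {A O : Type*} [DecidableEq O] (u : A → O → ℝ) :
    List A → List O → Finset O → Prop
  | [], [], _ => True
  | a :: s, o :: ps, rem =>
      o ∈ rem ∧ (∀ o' ∈ rem, u a o' ≤ u a o) ∧ seqValid10 u s ps (rem.erase o)
  | _, _, _ => False

/-- The bundle of items picked by agent `i` in the run `(seq, picks)`. -/
def bundle10 {n : ℕ} {O : Type*} [DecidableEq O] (seq : List (Fin n)) (picks : List O)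
    (i : Fin n) : Finset O :=
  ((seq.zip picks).filterMap (fun x => if x.1 = i then some x.2 else none)).toFinset

lemma div_mod_succ (n L : ℕ) (hn : 0 < n) :
    ((L % n + 1 < n → (L+1)/n = L/n ∧ (L+1)%n = L%n + 1) ∧
     (L % n + 1 = n → (L+1)/n = L/n + 1 ∧ (L+1)%n = 0)) := by
  constructor
  · intro h
    have h1 : L + 1 = (L % n + 1) + n * (L / n) := by
      have := Nat.mod_add_div L n; omega
    constructor
    · rw [h1, Nat.add_mul_div_left _ _ hn, Nat.div_eq_of_lt h]; omega
    · rw [h1, Nat.add_mul_mod_self_left, Nat.mod_eq_of_lt h]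
  · intro h
    have h1 : L + 1 = n * (L / n + 1) := by
      have h2 := Nat.mod_add_div L n
      rw [Nat.mul_add, Nat.mul_one]; omega
    constructor
    · rw [h1, Nat.mul_div_cancel_left _ hn]
    · rw [h1, Nat.mul_mod_right]

lemma pattern_step {n : ℕ} (hn : 0 < n) (L : ℕ) (i : Fin n) :
    ((L/n + if i.val < L%n then 1 else 0) + if i.val = L%n then 1 else 0)
      = (L+1)/n + if i.val < (L+1)%n then 1 else 0 := by
  have hr : L % n < n := Nat.mod_lt _ hn
  have hi : i.val < n := i.isLt
  rcases Nat.lt_or_ge (L % n + 1) n with h | h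
  · obtain ⟨hd, hm⟩ := (div_mod_succ n L hn).1 h
    rw [hd, hm]; split_ifs <;> omega
  · have h' : L % n + 1 = n := by omega
    obtain ⟨hd, hm⟩ := (div_mod_succ n L hn).2 h'
    rw [hd, hm]; split_ifs <;> omega

lemma cnt_cons {n : ℕ} {O : Type*} (a : Fin n) (o : O) (done : List (Fin n × O)) (i : Fin n) :
    cnt10 ((a,o)::done) i = cnt10 done i + if i = a then 1 else 0 := by
  simp only [cnt10, List.map_cons, List.count_cons]
  by_cases h : i = a
  · simp [h]
  · have : (a == i) = false := by
      simpa using fun he : a = i => h he.symm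
    simp [this, h]

lemma cnt_filter {n : ℕ} {O : Type*} (done : List (Fin n × O)) (i : Fin n) :
    cnt10 done i = (done.filter (fun p => p.1 = i)).length := by
  induction done with
  | nil => rfl
  | cons p rest ih =>
      simp only [cnt10, List.map_cons, List.count_cons, List.filter_cons] at *
      by_cases h : p.1 = i <;> simp [h, ih, cnt10]

lemma find_spec {n : ℕ} {O : Type*} [DecidableEq O] (done : List (Fin n × O))
    (hnd : (done.map Prod.snd).Nodup) (pr : Fin n × O) (hpr : pr ∈ done) :
    done.find? (fun p => p.2 = pr.2) = some pr := by
  induction done with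
  | nil => simp at hpr
  | cons p rest ih =>
      rcases List.mem_cons.1 hpr with h | h
      · subst h; simp [List.find?]
      · simp only [List.map_cons, List.nodup_cons] at hnd
        have hne : ¬ (p.2 = pr.2) := by
          intro he
          exact hnd.1 (he ▸ (List.mem_map_of_mem (f := Prod.snd) h))
        rw [List.find?_cons_of_neg (by simpa using hne)]
        exact ih hnd.2 h

lemma pattern_cons {n : ℕ} {O : Type*} (hn : 0 < n) (done : List (Fin n × O)) (o : O)
    (hpat : ∀ i, cnt10 done i = done.length / n + if i.val < done.length % n then 1 else 0)
    (a : Fin n) (ha : a.val = done.length % n) :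
    ∀ i : Fin n, cnt10 ((a,o)::done) i
      = ((a,o)::done).length / n + if i.val < ((a,o)::done).length % n then 1 else 0 := by
  intro i
  rw [cnt_cons, hpat i, List.length_cons]
  have : (if i = a then (1:ℕ) else 0) = if i.val = done.length % n then 1 else 0 := by
    by_cases h : i = a
    · simp [h, ha]
    · rw [if_neg h, if_neg (fun hv => h (Fin.ext (by rw [hv, ha])))]
  rw [this]
  exact pattern_step hn done.length i

lemma complete10 {n : ℕ} (hn : 0 < n) {O : Type*} [Fintype O] [DecidableEq O] :
    ∀ (k : ℕ) (done : List (Fin n × O)),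
    (Finset.univ \ (done.map Prod.snd).toFinset).card = k →
    (done.map Prod.snd).Nodup →
    (∀ i, cnt10 done i = done.length / n + if i.val < done.length % n then 1 else 0) →
    ∃ q : O → Fin n, Balanced10 q ∧ ∀ pr ∈ done, q pr.2 = pr.1 := by
  intro k
  induction k with
  | zero =>
      intro done hcard hnd hpat
      -- every item is covered
      have hcover : ∀ o : O, o ∈ (done.map Prod.snd).toFinset := by
        intro o
        by_contra h
        have : o ∈ Finset.univ \ (done.map Prod.snd).toFinset := by
          simp [h]
        rw [Finset.card_eq_zero] at hcard
        simp [hcard] at this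
      set q : O → Fin n := fun o =>
        ((done.find? (fun p => p.2 = o)).map Prod.fst).getD ⟨0, hn⟩ with hq
      have hspec : ∀ pr ∈ done, q pr.2 = pr.1 := by
        intro pr hpr
        rw [hq]
        simp [find_spec done hnd pr hpr]
      refine ⟨q, ?_, hspec⟩
      have hcnt : ∀ i : Fin n,
          (Finset.univ.filter fun o => q o = i).card = cnt10 done i := by
        intro i
        have hset : (Finset.univ.filter fun o => q o = i)
            = ((done.filter (fun p => p.1 = i)).map Prod.snd).toFinset := by
          ext o
          simp only [Finset.mem_filter, Finset.mem_univ, true_and, List.mem_toFinset,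
            List.mem_map, List.mem_filter]
          constructor
          · intro hqo
            have ho := hcover o
            rw [List.mem_toFinset, List.mem_map] at ho
            obtain ⟨pr, hpr, hpro⟩ := ho
            refine ⟨pr, ⟨hpr, ?_⟩, hpro⟩
            have := hspec pr hpr
            rw [hpro] at this
            rw [← this, hqo]
            simp
          · rintro ⟨pr, ⟨hpr, hpri⟩, hpro⟩
            have := hspec pr hpr
            rw [hpro] at this
            rw [this]
            simpa using hpri
        have hnd2 : ((done.filter (fun p => p.1 = i)).map Prod.snd).Nodup :=
          ((done.filter_sublist).map Prod.snd).nodup hnd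
        rw [hset, cnt_filter, List.card_toFinset, List.Nodup.dedup hnd2, List.length_map]
      intro i j
      rw [hcnt i, hcnt j, hpat i, hpat j]
      split_ifs <;> omega
  | succ k ih =>
      intro done hcard hnd hpat
      have hpos : 0 < (Finset.univ \ (done.map Prod.snd).toFinset).card := by omega
      obtain ⟨o, ho⟩ := Finset.card_pos.1 hpos
      have honot : o ∉ (done.map Prod.snd) := by
        rw [Finset.mem_sdiff] at ho
        simpa using ho.2
      set a : Fin n := ⟨done.length % n, Nat.mod_lt _ hn⟩ with hadef
      have h1 : (Finset.univ \ (((a,o)::done).map Prod.snd).toFinset).card = k := by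
        simp only [List.map_cons, List.toFinset_cons]
        rw [Finset.sdiff_insert]
        rw [Finset.card_erase_of_mem ho]
        omega
      have h2 : (((a,o)::done).map Prod.snd).Nodup := by
        simp only [List.map_cons, List.nodup_cons]
        exact ⟨fun h => honot h, hnd⟩
      have h3 := pattern_cons hn done o hpat a rfl
      obtain ⟨q, hbal, hq⟩ := ih ((a,o)::done) h1 h2 h3
      exact ⟨q, hbal, fun pr hpr => hq pr (List.mem_cons_of_mem _ hpr)⟩

lemma crr_main {n : ℕ} (hn : 0 < n) {O : Type*} [Fintype O] [DecidableEq O]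
    (u : Fin n → O → ℝ) (W : (O → Fin n) → Prop)
    (hW : ∀ q : O → Fin n, Balanced10 q → W q) :
    ∀ (seq : List (Fin n)) (picks : List O) (done : List (Fin n × O)) (rem : Finset O),
    crrValid W u seq picks done rem →
    (done.map Prod.snd).Nodup →
    rem = Finset.univ \ (done.map Prod.snd).toFinset →
    (∀ i, cnt10 done i = done.length / n + if i.val < done.length % n then 1 else 0) →
    (∀ k (hk : k < seq.length), (seq.get ⟨k, hk⟩).val = (done.length + k) % n) ∧
    seqValid10 u seq picks rem := by
  intro seq
  induction seq with
  | nil =>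
      intro picks done rem hrun _ _ _
      cases picks with
      | nil => exact ⟨fun k hk => absurd hk (by simp), trivial⟩
      | cons o ps => exact hrun.elim
  | cons a s ih =>
      intro picks done rem hrun hnd hrem hpat
      cases picks with
      | nil => exact hrun.elim
      | cons o ps =>
        obtain ⟨ho, hmax, hcomp, hmin, htie, htail⟩ := hrun
        set b0 : Fin n := ⟨done.length % n, Nat.mod_lt _ hn⟩ with hb0
        have hb0cnt : cnt10 done b0 = done.length / n := by rw [hpat]; simp [hb0]
        have haval : a.val = done.length % n := by
          have h1 : ¬ a.val < done.length % n := by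
            intro hlt
            have h := hmin b0
            rw [hb0cnt, hpat a, if_pos hlt] at h
            omega
          have hne : rem.Nonempty := ⟨o, ho⟩
          obtain ⟨o', ho', hmaxo'⟩ := Finset.exists_max_image rem (u b0) hne
          have ho'not : o' ∉ done.map Prod.snd := by
            rw [hrem, Finset.mem_sdiff] at ho'
            simpa using ho'.2
          have hcompb : Completable10 W ((b0, o') :: done) := by
            obtain ⟨q, hbal, hq⟩ := complete10 hn _ ((b0,o')::done) rfl
              (by simp only [List.map_cons, List.nodup_cons]; exact ⟨ho'not, hnd⟩)
              (pattern_cons hn done o' hpat b0 rfl)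
            exact ⟨q, hW q hbal, hq⟩
          have h2 := htie b0 (fun b' => by rw [hb0cnt, hpat b']; split_ifs <;> omega)
            ⟨o', ho', hmaxo', hcompb⟩
          have h3 : a.val ≤ b0.val := h2
          simp only [hb0] at h3
          omega
        have honot : o ∉ done.map Prod.snd := by
          rw [hrem, Finset.mem_sdiff] at ho
          simpa using ho.2
        have hnd' : (((a,o)::done).map Prod.snd).Nodup := by
          simp only [List.map_cons, List.nodup_cons]
          exact ⟨honot, hnd⟩
        have hrem' : rem.erase o = Finset.univ \ (((a,o)::done).map Prod.snd).toFinset := by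
          rw [hrem]
          simp only [List.map_cons, List.toFinset_cons]
          rw [Finset.sdiff_insert]
        obtain ⟨ihget, ihseq⟩ := ih ps ((a,o)::done) (rem.erase o) htail hnd' hrem'
          (pattern_cons hn done o hpat a haval)
        refine ⟨?_, ho, hmax, ihseq⟩
        intro k hk
        cases k with
        | zero =>
            show a.val = (done.length + 0) % n
            rw [Nat.add_zero]; exact haval
        | succ k =>
            have hk' : k < s.length := by
              simp only [List.length_cons] at hk; omega
            have h := ihget k hk'
            simp only [List.length_cons] at h
            show (s.get ⟨k, hk'⟩).val = (done.length + (k+1)) % n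
            rw [show done.length + (k+1) = done.length + 1 + k by omega]
            exact h

lemma seq_facts {A O : Type*} [DecidableEq O] (u : A → O → ℝ) :
    ∀ (s : List A) (ps : List O) (rem : Finset O), seqValid10 u s ps rem →
    s.length = ps.length ∧ ps.Nodup ∧ (∀ o ∈ ps, o ∈ rem) ∧
    ∀ k l (hk : k < s.length) (hl : l < ps.length) (hk2 : k < ps.length), k ≤ l →
      u (s.get ⟨k,hk⟩) (ps.get ⟨l,hl⟩) ≤ u (s.get ⟨k,hk⟩) (ps.get ⟨k,hk2⟩) := by
  intro s
  induction s with
  | nil =>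
      intro ps rem hrun
      cases ps with
      | nil => exact ⟨rfl, List.nodup_nil, by simp, fun k l hk => absurd hk (by simp)⟩
      | cons o pss => exact hrun.elim
  | cons a s ih =>
      intro ps rem hrun
      cases ps with
      | nil => exact hrun.elim
      | cons o pss =>
        obtain ⟨ho, hmax, htail⟩ := hrun
        obtain ⟨hlen, hnodup, hmem, hdom⟩ := ih pss (rem.erase o) htail
        refine ⟨by simp [hlen], ?_, ?_, ?_⟩
        · refine List.nodup_cons.2 ⟨?_, hnodup⟩
          intro hin
          exact (Finset.ne_of_mem_erase (hmem o hin)) rfl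
        · intro o' ho'
          rcases List.mem_cons.1 ho' with h | h
          · exact h ▸ ho
          · exact Finset.mem_of_mem_erase (hmem o' h)
        · intro k l hk hl hk2 hkl
          cases k with
          | zero =>
              cases l with
              | zero => exact le_refl _
              | succ l' =>
                  show u a ((o::pss).get ⟨l'+1, hl⟩) ≤ u a o
                  have : (o::pss).get ⟨l'+1, hl⟩ ∈ pss := by
                    show pss.get ⟨l', _⟩ ∈ pss
                    exact List.get_mem _ _
                  exact hmax _ (Finset.mem_of_mem_erase (hmem _ this))
          | succ k' =>
              cases l with
              | zero => omega
              | succ l' =>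
                  have hk' : k' < s.length := by simpa using hk
                  have hl' : l' < pss.length := by simpa using hl
                  have hk2' : k' < pss.length := by simpa using hk2
                  exact hdom k' l' hk' hl' hk2' (by omega)

lemma nef1 {n : ℕ} (hn : 0 < n) {O : Type*} [DecidableEq O] (u : Fin n → O → ℝ)
    (seq : List (Fin n)) (picks : List O)
    (hlen : seq.length = picks.length)
    (hnodup : picks.Nodup)
    (hget : ∀ k (hk : k < seq.length), (seq.get ⟨k,hk⟩).val = k % n)
    (hdom : ∀ k l (hk : k < seq.length) (hl : l < picks.length) (hk2 : k < picks.length),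
      k ≤ l →
      u (seq.get ⟨k,hk⟩) (picks.get ⟨l,hl⟩) ≤ u (seq.get ⟨k,hk⟩) (picks.get ⟨k,hk2⟩))
    (i j : Fin n) :
    ∃ O' ⊆ bundle10 seq picks j, O'.card ≤ 1 ∧
      ∃ f : O → O, Set.InjOn f ((bundle10 seq picks j \ O' : Finset O) : Set O) ∧
        ∀ x ∈ bundle10 seq picks j \ O',
          f x ∈ bundle10 seq picks i ∧ u i x ≤ u i (f x) := by
  classical
  -- membership characterization of bundles
  have hmemb : ∀ (c : Fin n) (x : O), x ∈ bundle10 seq picks c ↔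
      ∃ k, ∃ hk : k < picks.length, k % n = c.val ∧ picks[k]'hk = x := by
    intro c x
    simp only [bundle10, List.mem_toFinset, List.mem_filterMap]
    constructor
    · rintro ⟨⟨p1, p2⟩, hp, hpx⟩
      rw [List.mem_iff_getElem] at hp
      obtain ⟨k, hk, hpk⟩ := hp
      rw [List.length_zip, hlen, Nat.min_self] at hk
      rw [List.getElem_zip, Prod.mk.injEq] at hpk
      have hks : k < seq.length := by omega
      split_ifs at hpx with hc
      · refine ⟨k, hk, ?_, by rw [hpk.2]; simpa using hpx⟩
        rw [← hget k hks]
        simp only [List.get_eq_getElem]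
        have hc' : p1 = c := by simpa using hc
        rw [hpk.1]
        exact congrArg Fin.val hc'
    · rintro ⟨k, hk, hkc, hkx⟩
      have hks : k < seq.length := by omega
      refine ⟨(seq[k]'hks, picks[k]'hk), ?_, ?_⟩
      · rw [List.mem_iff_getElem]
        refine ⟨k, by rw [List.length_zip, hlen, Nat.min_self]; exact hk, ?_⟩
        rw [List.getElem_zip]
      · have hc : seq[k]'hks = c := by
          apply Fin.ext
          have := hget k hks
          simp only [List.get_eq_getElem] at this
          rw [this, hkc]
        simp [hc, hkx]
  -- indexOf is the unique index
  have hidx : ∀ (x : O) (k : ℕ) (hk : k < picks.length), picks[k]'hk = x →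
      picks.idxOf x = k := by
    intro x k hk hkx
    have hx : x ∈ picks := hkx ▸ List.getElem_mem hk
    have h1 : picks.idxOf x < picks.length := List.idxOf_lt_length_iff.2 hx
    have h2 : picks[picks.idxOf x]'h1 = x := List.getElem_idxOf h1
    exact (List.Nodup.getElem_inj_iff hnodup).1 (by rw [h2, hkx])
  have hdom' : ∀ t l (ht : t < picks.length) (hl : l < picks.length), t ≤ l →
      t % n = i.val → u i (picks[l]'hl) ≤ u i (picks[t]'ht) := by
    intro t l ht hl htl hti
    have hts : t < seq.length := by omega
    have hseqt : seq.get ⟨t, hts⟩ = i := Fin.ext (by rw [hget t hts, hti])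
    have h := hdom t l hts hl ht htl
    rw [hseqt] at h
    simpa only [List.get_eq_getElem] using h
  set d : ℕ := if i.val ≤ j.val then j.val - i.val else n + j.val - i.val with hd
  set O' : Finset O := if i.val ≤ j.val then (∅ : Finset O)
      else (bundle10 seq picks j).filter (fun x => picks.idxOf x < n) with hO'
  have hdn : d < n := by
    rw [hd]; have := i.isLt; have := j.isLt; split_ifs <;> omega
  -- key : indices of elements of bundle j \ O'
  have key : ∀ x ∈ bundle10 seq picks j \ O',
      ∃ k : ℕ, ∃ hk : k < picks.length, picks.idxOf x = k ∧ picks[k]'hk = x ∧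
        d ≤ k ∧ (k - d) % n = i.val := by
    intro x hx
    rw [Finset.mem_sdiff] at hx
    obtain ⟨hxb, hxo⟩ := hx
    obtain ⟨k, hk, hkj, hkx⟩ := (hmemb j x).1 hxb
    have hix := hidx x k hk hkx
    have hdm := Nat.div_add_mod k n
    rw [hkj] at hdm
    obtain ⟨e, he⟩ : ∃ e, n * (k / n) = n * e := ⟨k / n, rfl⟩
    refine ⟨k, hk, hix, hkx, ?_, ?_⟩
    · rw [hd]
      split_ifs with hij
      · omega
      · -- i > j : k ≥ n since x ∉ O'
        have hkn : ¬ picks.idxOf x < n := by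
          intro hlt
          apply hxo
          rw [hO', if_neg hij, Finset.mem_filter]
          exact ⟨hxb, hlt⟩
        rw [hix] at hkn
        omega
    · have hin := i.isLt
      have hjn := j.isLt
      rw [hd]
      split_ifs with hij
      · have ht : k - (j.val - i.val) = n * e + i.val := by omega
        rw [ht, Nat.mul_add_mod, Nat.mod_eq_of_lt hin]
      · have hkn : ¬ picks.idxOf x < n := by
          intro hlt
          apply hxo
          rw [hO', if_neg hij, Finset.mem_filter]
          exact ⟨hxb, hlt⟩
        rw [hix] at hkn
        have he1 : 1 ≤ e := by
          rcases Nat.eq_zero_or_pos e with h0 | h1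
          · rw [h0, Nat.mul_zero] at he; omega
          · exact h1
        have hne : n * e = n * (e - 1) + n := by
          have h9 : e = (e - 1) + 1 := by omega
          calc n * e = n * ((e-1)+1) := by rw [← h9]
          _ = n * (e-1) + n := by rw [Nat.mul_add, Nat.mul_one]
        have ht : k - (n + j.val - i.val) = n * (e - 1) + i.val := by omega
        rw [ht, Nat.mul_add_mod, Nat.mod_eq_of_lt hin]
  set f : O → O := fun x =>
    if h : picks.idxOf x - d < picks.length then picks[picks.idxOf x - d]'h else x
    with hf
  have hfval : ∀ x ∈ bundle10 seq picks j \ O',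
      ∃ k : ℕ, ∃ hk : k < picks.length, picks.idxOf x = k ∧ picks[k]'hk = x ∧
        d ≤ k ∧ (k - d) % n = i.val ∧
        ∃ ht : k - d < picks.length, f x = picks[k - d]'ht := by
    intro x hx
    obtain ⟨k, hk, hik, hkx, hdk, hmod⟩ := key x hx
    have ht : k - d < picks.length := by omega
    refine ⟨k, hk, hik, hkx, hdk, hmod, ht, ?_⟩
    rw [hf]
    simp only [hik]
    rw [dif_pos ht]
  refine ⟨O', ?_, ?_, f, ?_, ?_⟩
  · rw [hO']; split_ifs
    · exact Finset.empty_subset _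
    · exact Finset.filter_subset _ _
  · rw [hO']; split_ifs with hij
    · simp
    · refine Finset.card_le_one.2 ?_
      intro a ha b hb
      rw [Finset.mem_filter] at ha hb
      obtain ⟨k1, hk1, hkj1, hkx1⟩ := (hmemb j a).1 ha.1
      obtain ⟨k2, hk2, hkj2, hkx2⟩ := (hmemb j b).1 hb.1
      have hi1 := hidx a k1 hk1 hkx1
      have hi2 := hidx b k2 hk2 hkx2
      have h1 : k1 < n := hi1 ▸ ha.2
      have h2 : k2 < n := hi2 ▸ hb.2
      have : k1 = k2 := by
        rw [Nat.mod_eq_of_lt h1] at hkj1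
        rw [Nat.mod_eq_of_lt h2] at hkj2
        omega
      subst this
      rw [← hkx1, ← hkx2]
  · -- injectivity
    intro x hx y hy hfxy
    simp only [Finset.coe_sdiff, Set.mem_diff, Finset.mem_coe] at hx hy
    have hx' : x ∈ bundle10 seq picks j \ O' := Finset.mem_sdiff.2 hx
    have hy' : y ∈ bundle10 seq picks j \ O' := Finset.mem_sdiff.2 hy
    obtain ⟨k1, hk1, hik1, hkx1, hdk1, hm1, ht1, hfx1⟩ := hfval x hx'
    obtain ⟨k2, hk2, hik2, hkx2, hdk2, hm2, ht2, hfx2⟩ := hfval y hy'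
    rw [hfx1, hfx2] at hfxy
    have : k1 - d = k2 - d := (List.Nodup.getElem_inj_iff hnodup).1 hfxy
    have : k1 = k2 := by omega
    subst this
    rw [← hkx1, ← hkx2]
  · intro x hx
    obtain ⟨k, hk, hik, hkx, hdk, hmod, ht, hfx⟩ := hfval x hx
    constructor
    · rw [hfx, hmemb]
      exact ⟨k - d, ht, hmod, rfl⟩
    · rw [hfx, ← hkx]
      exact hdom' (k - d) k ht hk (by omega) hmod


/-- If the target welfare set `W` contains all balanced allocations, then W-CRR coincides
with round-robin sequential allocation; in particular, with strictly positive utilities the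
output is NEF1. -/
theorem stmt10 {n : ℕ} (hn : 0 < n) {O : Type*} [Fintype O] [DecidableEq O]
    (u : Fin n → O → ℝ) (W : (O → Fin n) → Prop)
    (hW : ∀ q : O → Fin n, Balanced10 q → W q)
    (seq : List (Fin n)) (picks : List O)
    (hrun : crrValid W u seq picks [] Finset.univ)
    (hfull : seq.length = Fintype.card O) :
    (∀ k (hk : k < seq.length), seq.get ⟨k, hk⟩ = ⟨k % n, Nat.mod_lt _ hn⟩) ∧
    seqValid10 u seq picks Finset.univ ∧
    ((∀ i o, 0 < u i o) →
      ∀ i j : Fin n, ∃ O' ⊆ bundle10 seq picks j, O'.card ≤ 1 ∧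
        ∃ f : O → O, Set.InjOn f ((bundle10 seq picks j \ O' : Finset O) : Set O) ∧
          ∀ x ∈ bundle10 seq picks j \ O',
            f x ∈ bundle10 seq picks i ∧ u i x ≤ u i (f x)) := by
  have hpat0 : ∀ i : Fin n, cnt10 ([] : List (Fin n × O)) i
      = ([] : List (Fin n × O)).length / n
        + if i.val < ([] : List (Fin n × O)).length % n then 1 else 0 := by
    intro i
    simp [cnt10]
  obtain ⟨hget, hseq⟩ := crr_main hn u W hW seq picks [] Finset.univ hrun
    (by simp) (by simp) hpat0
  have hget' : ∀ k (hk : k < seq.length), (seq.get ⟨k, hk⟩).val = k % n := by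
    intro k hk
    have := hget k hk
    simpa using this
  refine ⟨fun k hk => Fin.ext (hget' k hk), hseq, ?_⟩
  intro _ i j
  obtain ⟨hlen, hnodup, _, hdom⟩ := seq_facts u seq picks Finset.univ hseq
  exact nef1 hn u seq picks hlen hnodup hget' hdom i j
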